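/- arXiv:0906.3231 — 2 statements merged into one kernel-verified Lean document; each statement's English description precedes it below -/
import Mathlib

section
/- Every set of natural numbers generated by a P system with symport/antiport of degree 1 using only symport rules of size at most 2 (minimal symport) is finite; that is, NOP_1(sym_2) ⊆ NFIN. -/
/-- `NRE`: the family of recursively enumerable sets of natural numbers,
i.e., the domains of partial recursive functions. -/
def NRE : Set (Set ℕ) := { S | ∃ f : ℕ →. ℕ, Nat.Partrec f ∧ S = f.Dom }

/-- `NFIN`: the family of finite sets of natural numbers. -/
def NFIN : Set (Set ℕ) := { S | S.Finite }

/-- Rules of a P system with symport/antiport over the alphabet `Fin k`: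
`symIn x` is the symport rule `(x, in)`, `symOut y` is the symport rule
`(y, out)`, and `anti y x` is the antiport rule `(y, out; x, in)`. -/
inductive PRule (k : ℕ) : Type where
  | symIn  (x : Multiset (Fin k)) : PRule k
  | symOut (y : Multiset (Fin k)) : PRule k
  | anti   (y x : Multiset (Fin k)) : PRule k
  deriving DecidableEq

namespace PRule

variable {k : ℕ}

/-- The rule is a symport rule. -/
def IsSym : PRule k → Prop
  | symIn _ => True
  | symOut _ => True
  | anti _ _ => False

/-- The rule is an antiport rule. -/
def IsAnti : PRule k → Prop
  | symIn _ => False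
  | symOut _ => False
  | anti _ _ => True

/-- The size of a rule: `|x|` for a symport rule `(x,in)` or `(x,out)`,
and `max {|y|, |x|}` for an antiport rule `(y,out; x,in)`. -/
def size : PRule k → ℕ
  | symIn x => Multiset.card x
  | symOut y => Multiset.card y
  | anti y x => max (Multiset.card y) (Multiset.card x)

/-- The objects the rule consumes from its own region. -/
def fromSelf : PRule k → Multiset (Fin k)
  | symIn _ => 0
  | symOut y => y
  | anti y _ => y

/-- The objects the rule consumes from the immediately outer region. -/
def fromOuter : PRule k → Multiset (Fin k)
  | symIn x => x
  | symOut _ => 0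
  | anti _ x => x

/-- The objects the rule sends into its own region. -/
def toSelf : PRule k → Multiset (Fin k)
  | symIn x => x
  | symOut _ => 0
  | anti _ x => x

/-- The objects the rule sends into the immediately outer region. -/
def toOuter : PRule k → Multiset (Fin k)
  | symIn _ => 0
  | symOut y => y
  | anti y _ => y

end PRule

/-- A P system with symport/antiport of degree `n` over the alphabet `Fin k`
(so the alphabet `O` has exactly `k` objects).  The membrane structure is a
hierarchy (tree) of nested membranes described by the `parent` map;
`parent i = none` means membrane `i` is the skin membrane, whose outer region
is the environment.  The skin membrane is labelled `0`. -/
structure PSystem (n k : ℕ) : Type where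
  /-- the membrane structure: the immediately outer membrane of each membrane
  (`none` for the skin membrane). -/
  parent : Fin n → Option (Fin n)
  /-- membrane `0` is the unique skin membrane -/
  skin_unique : ∀ i : Fin n, parent i = none ↔ (i : ℕ) = 0
  /-- nesting is well-founded (membranes are numbered outside-in) -/
  parent_lt : ∀ i j : Fin n, parent j = some i → (i : ℕ) < (j : ℕ)
  /-- the initial multiset of each region -/
  w : Fin n → Multiset (Fin k)
  /-- the objects occurring in the environment in infinitely many copies -/
  E : Finset (Fin k)
  /-- the finite set of rules of each region -/
  rules : Fin n → Finset (PRule k)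
  /-- symport rules `(x, in)` with `x ∈ E*` are forbidden at the skin membrane -/
  skin_ok : ∀ i : Fin n, parent i = none →
      ∀ x, PRule.symIn x ∈ rules i → ¬ (∀ a ∈ x, a ∈ E)
  /-- the output membrane -/
  i0 : Fin n
  /-- the output membrane is elementary -/
  i0_elem : ∀ j : Fin n, parent j ≠ some i0

/-- A configuration of a P system of degree `n` over alphabet `Fin k`:
the contents of each region, together with the finite part of the environment
(objects of `E` are present in the environment in infinitely many copies
and need not be tracked; all other objects occur in the environment in the
finite multiset `env`). -/
structure PConfig (n k : ℕ) : Type where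
  regions : Fin n → Multiset (Fin k)
  env : Multiset (Fin k)

namespace PSystem

/-- A selection of rule instances to be applied simultaneously:
a multiset of rules for each region. -/
abbrev RuleSel (n k : ℕ) := Fin n → Multiset (PRule k)

variable {n k : ℕ} (P : PSystem n k)

/-- The multiset of objects a selection of rule instances removes from region `j`. -/
def demand (R : RuleSel n k) (j : Fin n) : Multiset (Fin k) :=
  ((R j).map PRule.fromSelf).sum +
    ∑ i ∈ Finset.univ.filter (fun i => P.parent i = some j),
      ((R i).map PRule.fromOuter).sum

/-- The multiset of objects a selection of rule instances removes from the environment. -/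
def envDemand (R : RuleSel n k) : Multiset (Fin k) :=
  ∑ i ∈ Finset.univ.filter (fun i => P.parent i = none),
    ((R i).map PRule.fromOuter).sum

/-- The multiset of objects a selection of rule instances puts into region `j`. -/
def supply (R : RuleSel n k) (j : Fin n) : Multiset (Fin k) :=
  ((R j).map PRule.toSelf).sum +
    ∑ i ∈ Finset.univ.filter (fun i => P.parent i = some j),
      ((R i).map PRule.toOuter).sum

/-- The multiset of objects a selection of rule instances puts into the environment. -/
def envSupply (R : RuleSel n k) : Multiset (Fin k) :=
  ∑ i ∈ Finset.univ.filter (fun i => P.parent i = none),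
    ((R i).map PRule.toOuter).sum

/-- A selection of rule instances is applicable in configuration `c`: it uses
only rules of the system, and all consumed objects are available (objects of
`E` are available in the environment in any quantity). -/
def Applicable (c : PConfig n k) (R : RuleSel n k) : Prop :=
  (∀ j : Fin n, ∀ r ∈ R j, r ∈ P.rules j) ∧
  (∀ j : Fin n, P.demand R j ≤ c.regions j) ∧
  (∀ a : Fin k, a ∉ P.E → (P.envDemand R).count a ≤ c.env.count a)

/-- The configuration obtained by applying a selection of rule instances. -/
def applySel (c : PConfig n k) (R : RuleSel n k) : PConfig n k where
  regions := fun j => c.regions j - P.demand R j + P.supply R j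
  env := c.env - P.envDemand R + P.envSupply R

/-- The selection `R` is applicable and maximal: no further rule instance can
be added while remaining applicable. -/
def MaxApplicable (c : PConfig n k) (R : RuleSel n k) : Prop :=
  P.Applicable c R ∧
    ∀ (j : Fin n) (r : PRule k), r ∈ P.rules j →
      ¬ P.Applicable c (Function.update R j (R j + {r}))

/-- One computation step: a non-empty maximal applicable selection of rule
instances is applied (non-deterministic maximal parallelism). -/
def Step (c c' : PConfig n k) : Prop :=
  ∃ R : RuleSel n k, P.MaxApplicable c R ∧ (∃ j, R j ≠ 0) ∧ c' = P.applySel c R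

/-- A configuration is halting when no rule instance is applicable in it. -/
def Halted (c : PConfig n k) : Prop :=
  ∀ (j : Fin n) (r : PRule k), r ∈ P.rules j →
    ¬ P.Applicable c (Function.update (fun _ => (0 : Multiset (PRule k))) j {r})

/-- The initial configuration: region `i` contains `w i` and the environment
contains nothing besides the objects of `E`. -/
def init : PConfig n k := ⟨P.w, 0⟩

/-- Reachability by computation steps. -/
def Reaches : PConfig n k → PConfig n k → Prop :=
  Relation.ReflTransGen P.Step

/-- `N(Π)`: the set of natural numbers computed by the system, i.e., the
numbers of objects present in the output region in the halting configurations
reachable from the initial configuration. -/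
def NSet : Set ℕ :=
  { m | ∃ c : PConfig n k, P.Reaches P.init c ∧ P.Halted c ∧
      Multiset.card (c.regions P.i0) = m }

/-- All symport rules of the system have size at most `r`. -/
def SymBound (r : ℕ) : Prop :=
  ∀ i : Fin n, ∀ ru ∈ P.rules i, ru.IsSym → ru.size ≤ r

/-- All antiport rules of the system have size at most `t`. -/
def AntiBound (t : ℕ) : Prop :=
  ∀ i : Fin n, ∀ ru ∈ P.rules i, ru.IsAnti → ru.size ≤ t

/-- The system uses only symport rules. -/
def SymOnly : Prop := ∀ i : Fin n, ∀ ru ∈ P.rules i, ru.IsSym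

/-- The system uses only antiport rules. -/
def AntiOnly : Prop := ∀ i : Fin n, ∀ ru ∈ P.rules i, ru.IsAnti

/-- The system is deterministic: from every reachable configuration at most
one (maximally parallel) computation step is possible. -/
def Deterministic : Prop :=
  ∀ c : PConfig n k, P.Reaches P.init c →
    ∀ c₁ c₂, P.Step c c₁ → P.Step c c₂ → c₁ = c₂

/-- The total number of objects present in the system (inside the skin membrane). -/
def totalObjects (c : PConfig n k) : ℕ := ∑ i : Fin n, Multiset.card (c.regions i)

end PSystem

/-- `NOP_n(sym_r, anti_t)`: the family of sets of natural numbers generated by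
P systems with symport/antiport of degree at most `n`, with symport rules of
size at most `r` and antiport rules of size at most `t`. -/
def NOP (n r t : ℕ) : Set (Set ℕ) :=
  { S | ∃ m : ℕ, 1 ≤ m ∧ m ≤ n ∧ ∃ (k : ℕ) (P : PSystem m k),
      P.SymBound r ∧ P.AntiBound t ∧ S = P.NSet }

/-- `NOP_n(sym_r)`: the family of sets of natural numbers generated by
P systems with symport/antiport of degree at most `n` using only symport rules
of size at most `r`. -/
def NOPsym (n r : ℕ) : Set (Set ℕ) :=
  { S | ∃ m : ℕ, 1 ≤ m ∧ m ≤ n ∧ ∃ (k : ℕ) (P : PSystem m k),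
      P.SymOnly ∧ P.SymBound r ∧ S = P.NSet }

/-- `NOP_n(anti_t)`: the family of sets of natural numbers generated by
P systems with symport/antiport of degree at most `n` using only antiport
rules of size at most `t`. -/
def NOPanti (n t : ℕ) : Set (Set ℕ) :=
  { S | ∃ m : ℕ, 1 ≤ m ∧ m ≤ n ∧ ∃ (k : ℕ) (P : PSystem m k),
      P.AntiOnly ∧ P.AntiBound t ∧ S = P.NSet }


section NOPFinProof

open Multiset

variable {k : ℕ}

private lemma card_eq_sum_count (z : Multiset (Fin k)) : z.card = ∑ a, z.count a := by
  rw [← Multiset.toFinset_sum_count_eq]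
  refine Finset.sum_subset (Finset.subset_univ _) fun x _ hx => ?_
  simpa [Multiset.count_eq_zero] using hx

private lemma sum_ite_add (p : Fin k → Prop) [DecidablePred p] (f g : Fin k → ℕ) :
    (∑ a, if p a then f a + g a else 0) =
      (∑ a, if p a then f a else 0) + ∑ a, if p a then g a else 0 := by
  rw [← Finset.sum_add_distrib]
  exact Finset.sum_congr rfl fun a _ => by split_ifs <;> simp

private lemma msum_finsum {β : Type*} (C : Multiset β) (h : β → Fin k → ℕ) :
    (C.map fun r => ∑ a, h r a).sum = ∑ a, (C.map fun r => h r a).sum := by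
  induction C using Multiset.induction_on with
  | empty => simp
  | cons r C ih => simp [ih, Finset.sum_add_distrib]

private lemma sum_map_ite {β : Type*} (C : Multiset β) (P : Prop) [Decidable P] (f : β → ℕ) :
    (C.map fun r => if P then f r else 0).sum = if P then (C.map f).sum else 0 := by
  split_ifs <;> simp

private lemma sum_count_filter {β : Type*} (C : Multiset β) (f : β → Multiset (Fin k))
    (p : Fin k → Prop) [DecidablePred p] :
    (C.map fun r => ∑ a, if p a then (f r).count a else 0).sum
      = ∑ a, if p a then ((C.map f).sum).count a else 0 := by
  rw [msum_finsum]
  refine Finset.sum_congr rfl fun a _ => ?_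
  rw [sum_map_ite, Multiset.count_sum]

/-- Per-instance inequality for blocked in-rules. -/
private lemma in_ineq (E : Finset (Fin k)) (u v W x : Multiset (Fin k))
    (hlive : ∀ a, a ∉ E → x.count a ≤ W.count a)
    (hcons : ∀ a, a ∉ E → u.count a + v.count a = W.count a)
    (hcard : x.card ≤ 2)
    (hblock : ∃ o, o ∉ E ∧ v.count o < x.count o) :
    ((∑ a, if a ∈ E then x.count a else 0) +
      ∑ a, if a ∉ E ∧ u.count a = 0 then x.count a else 0) ≤
      ∑ a, if a ∉ E ∧ v.count a = 0 then x.count a else 0 := by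
  obtain ⟨o, hoE, hov⟩ := hblock
  by_cases h0 : v.count o = 0
  · have hwin : 1 ≤ ∑ a, if a ∉ E ∧ v.count a = 0 then x.count a else 0 := by
      calc (1:ℕ) ≤ x.count o := by omega
      _ = if o ∉ E ∧ v.count o = 0 then x.count o else 0 := by simp [hoE, h0]
      _ ≤ _ := Finset.single_le_sum
            (f := fun a => if a ∉ E ∧ v.count a = 0 then x.count a else 0)
            (fun i _ => Nat.zero_le _) (Finset.mem_univ o)
    have hdisj : (∑ a, if a ∈ E then x.count a else 0) +
        ((∑ a, if a ∉ E ∧ u.count a = 0 then x.count a else 0) +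
         (∑ a, if a ∉ E ∧ v.count a = 0 then x.count a else 0)) ≤ x.card := by
      rw [card_eq_sum_count, ← Finset.sum_add_distrib, ← Finset.sum_add_distrib]
      refine Finset.sum_le_sum fun a _ => ?_
      by_cases haE : a ∈ E
      · simp [haE]
      · by_cases hc : x.count a = 0
        · simp [hc]
        · have hne : ¬(u.count a = 0 ∧ v.count a = 0) := by
            rintro ⟨h1, h2⟩
            have h3 := hcons a haE
            have h4 := hlive a haE
            omega
          split_ifs <;> simp_all
    omega
  · have hc2 : x.count o = 2 := by have := Multiset.count_le_card o x; omega
    have hall : ∀ b ∈ x, o = b :=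
      Multiset.count_eq_card.1 (le_antisymm (Multiset.count_le_card o x) (by omega))
    have hmix : (∑ a, if a ∈ E then x.count a else 0) = 0 := by
      refine Finset.sum_eq_zero fun a _ => ?_
      split_ifs with h
      · by_contra hne
        have hax : a ∈ x := Multiset.count_pos.1 (by omega)
        exact hoE ((hall a hax) ▸ h)
      · rfl
    have hrho : (∑ a, if a ∉ E ∧ u.count a = 0 then x.count a else 0) = 0 := by
      refine Finset.sum_eq_zero fun a _ => ?_
      split_ifs with h
      · by_contra hne
        obtain rfl := hall a (Multiset.count_pos.1 (by omega))
        have h3 := hcons _ h.1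
        have h4 := hlive _ h.1
        omega
      · rfl
    rw [hmix, hrho]
    exact Nat.zero_le _

/-- Per-instance inequality for blocked out-rules. -/
private lemma out_ineq (E : Finset (Fin k)) (u v W y : Multiset (Fin k))
    (hlive : ∀ a, a ∉ E → y.count a ≤ W.count a)
    (hcons : ∀ a, a ∉ E → u.count a + v.count a = W.count a)
    (hcard : y.card ≤ 2)
    (hblock : ∃ o, u.count o < y.count o) :
    (∑ a, if a ∉ E ∧ v.count a = 0 then y.count a else 0) ≤
      (∑ a, if a ∉ E ∧ u.count a = 0 then y.count a else 0) +
      ∑ a, if a ∈ E ∧ u.count a = 0 then y.count a else 0 := by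
  obtain ⟨o, ho⟩ := hblock
  by_cases hu0 : u.count o = 0
  · have h1 : 1 ≤ (∑ a, if a ∉ E ∧ u.count a = 0 then y.count a else 0) +
        ∑ a, if a ∈ E ∧ u.count a = 0 then y.count a else 0 := by
      by_cases hoE : o ∈ E
      · have : (1:ℕ) ≤ ∑ a, if a ∈ E ∧ u.count a = 0 then y.count a else 0 := by
          calc (1:ℕ) ≤ y.count o := by omega
          _ = if o ∈ E ∧ u.count o = 0 then y.count o else 0 := by simp [hoE, hu0]
          _ ≤ _ := Finset.single_le_sum
                (f := fun a => if a ∈ E ∧ u.count a = 0 then y.count a else 0)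
                (fun i _ => Nat.zero_le _) (Finset.mem_univ o)
        omega
      · have : (1:ℕ) ≤ ∑ a, if a ∉ E ∧ u.count a = 0 then y.count a else 0 := by
          calc (1:ℕ) ≤ y.count o := by omega
          _ = if o ∉ E ∧ u.count o = 0 then y.count o else 0 := by simp [hoE, hu0]
          _ ≤ _ := Finset.single_le_sum
                (f := fun a => if a ∉ E ∧ u.count a = 0 then y.count a else 0)
                (fun i _ => Nat.zero_le _) (Finset.mem_univ o)
        omega
    have hdisj : (∑ a, if a ∉ E ∧ v.count a = 0 then y.count a else 0) +
        ((∑ a, if a ∉ E ∧ u.count a = 0 then y.count a else 0) +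
         (∑ a, if a ∈ E ∧ u.count a = 0 then y.count a else 0)) ≤ y.card := by
      rw [card_eq_sum_count, ← Finset.sum_add_distrib, ← Finset.sum_add_distrib]
      refine Finset.sum_le_sum fun a _ => ?_
      by_cases haE : a ∈ E
      · split_ifs <;> simp_all
      · by_cases hc : y.count a = 0
        · simp [hc]
        · have hne : ¬(u.count a = 0 ∧ v.count a = 0) := by
            rintro ⟨h1, h2⟩
            have h3 := hcons a haE
            have h4 := hlive a haE
            omega
          split_ifs <;> simp_all
    omega
  · have hc2 : y.count o = 2 := by have := Multiset.count_le_card o y; omega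
    have hall : ∀ b ∈ y, o = b :=
      Multiset.count_eq_card.1 (le_antisymm (Multiset.count_le_card o y) (by omega))
    have hT : (∑ a, if a ∉ E ∧ v.count a = 0 then y.count a else 0) = 0 := by
      refine Finset.sum_eq_zero fun a _ => ?_
      split_ifs with h
      · by_contra hne
        obtain rfl := hall a (Multiset.count_pos.1 (by omega))
        have h3 := hcons _ h.1
        have h4 := hlive _ h.1
        omega
      · rfl
    rw [hT]
    exact Nat.zero_le _

private lemma parent_eq_none (P : PSystem 1 k) (i : Fin 1) : P.parent i = none :=
  (P.skin_unique i).2 (Nat.lt_one_iff.1 i.isLt)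

private lemma filter_parent_some (P : PSystem 1 k) (j : Fin 1) :
    (Finset.univ.filter fun i : Fin 1 => P.parent i = some j) = ∅ := by
  ext i
  simp [parent_eq_none]

private lemma filter_parent_none (P : PSystem 1 k) :
    (Finset.univ.filter fun i : Fin 1 => P.parent i = none) = Finset.univ := by
  ext i
  simp [parent_eq_none]

private lemma demand_eq (P : PSystem 1 k) (R : PSystem.RuleSel 1 k) (j : Fin 1) :
    P.demand R j = ((R j).map PRule.fromSelf).sum := by
  unfold PSystem.demand
  rw [filter_parent_some]
  simp

private lemma supply_eq (P : PSystem 1 k) (R : PSystem.RuleSel 1 k) (j : Fin 1) :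
    P.supply R j = ((R j).map PRule.toSelf).sum := by
  unfold PSystem.supply
  rw [filter_parent_some]
  simp

private lemma envDemand_eq (P : PSystem 1 k) (R : PSystem.RuleSel 1 k) :
    P.envDemand R = ((R 0).map PRule.fromOuter).sum := by
  unfold PSystem.envDemand
  rw [filter_parent_none, Fin.sum_univ_one]

private lemma envSupply_eq (P : PSystem 1 k) (R : PSystem.RuleSel 1 k) :
    P.envSupply R = ((R 0).map PRule.toOuter).sum := by
  unfold PSystem.envSupply
  rw [filter_parent_none, Fin.sum_univ_one]

/-- Accounting invariant: `C` is the multiset of all rule applications so far. -/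
private def GoodC (P : PSystem 1 k) (c : PConfig 1 k) (C : Multiset (PRule k)) : Prop :=
  (∀ r ∈ C, r ∈ P.rules 0) ∧
  (∀ r ∈ C, ∀ a, a ∉ P.E →
      (r.fromSelf.count a ≤ (P.w 0).count a ∧ r.fromOuter.count a ≤ (P.w 0).count a)) ∧
  (∀ o : Fin k, (c.regions 0).count o + ((C.map PRule.fromSelf).sum).count o
      = (P.w 0).count o + ((C.map PRule.fromOuter).sum).count o) ∧
  (∀ a : Fin k, a ∉ P.E →
      c.env.count a + ((C.map PRule.fromOuter).sum).count a
        = ((C.map PRule.fromSelf).sum).count a)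

private lemma GoodC_init (P : PSystem 1 k) : GoodC P P.init 0 := by
  refine ⟨by simp, by simp, ?_, ?_⟩
  · intro o
    simp [PSystem.init]
  · intro a _
    simp [PSystem.init]

private lemma GoodC_step (P : PSystem 1 k) (hsym : P.SymOnly) {c c' : PConfig 1 k}
    {C : Multiset (PRule k)} (hC : GoodC P c C) (hstep : P.Step c c') :
    ∃ C', GoodC P c' C' := by
  obtain ⟨R, hmax, -, rfl⟩ := hstep
  obtain ⟨hrul, hreg, henv⟩ := hmax.1
  obtain ⟨hCr, hCl, hA, hB⟩ := hC
  have hcons : ∀ a, a ∉ P.E →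
      (c.regions 0).count a + c.env.count a = (P.w 0).count a := by
    intro a ha
    have h1 := hA a
    have h2 := hB a ha
    omega
  have htos : ((R 0).map PRule.toSelf) = ((R 0).map PRule.fromOuter) := by
    refine Multiset.map_congr rfl fun r hr => ?_
    have hs := hsym 0 r (hrul 0 r hr)
    cases r with
    | symIn x => rfl
    | symOut y => rfl
    | anti y x => exact (hs : False).elim
  have htoo : ((R 0).map PRule.toOuter) = ((R 0).map PRule.fromSelf) := by
    refine Multiset.map_congr rfl fun r hr => ?_
    have hs := hsym 0 r (hrul 0 r hr)
    cases r with
    | symIn x => rfl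
    | symOut y => rfl
    | anti y x => exact (hs : False).elim
  refine ⟨C + R 0, ?_, ?_, ?_, ?_⟩
  · intro r hr
    rcases Multiset.mem_add.1 hr with h | h
    · exact hCr r h
    · exact hrul 0 r h
  · intro r hr a ha
    rcases Multiset.mem_add.1 hr with h | h
    · exact hCl r h a ha
    · constructor
      · have h1 : PRule.fromSelf r ≤ ((R 0).map PRule.fromSelf).sum :=
          Multiset.single_le_sum (fun x _ => Multiset.zero_le x) _
            (Multiset.mem_map_of_mem _ h)
        have h2 : ((R 0).map PRule.fromSelf).sum.count a ≤ (c.regions 0).count a := by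
          have := Multiset.count_le_of_le a ((demand_eq P R 0) ▸ hreg 0)
          exact this
        have h3 := Multiset.count_le_of_le a h1
        have h4 := hcons a ha
        omega
      · have h1 : PRule.fromOuter r ≤ ((R 0).map PRule.fromOuter).sum :=
          Multiset.single_le_sum (fun x _ => Multiset.zero_le x) _
            (Multiset.mem_map_of_mem _ h)
        have h2 : ((R 0).map PRule.fromOuter).sum.count a ≤ c.env.count a := by
          have h5 := henv a ha
          rwa [envDemand_eq P R] at h5
        have h3 := Multiset.count_le_of_le a h1
        have h4 := hcons a ha
        omega
  · intro o
    have hAo := hA o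
    have hdle : (P.demand R 0).count o ≤ (c.regions 0).count o :=
      Multiset.count_le_of_le o (hreg 0)
    have happ : (P.applySel c R).regions 0
        = c.regions 0 - P.demand R 0 + P.supply R 0 := rfl
    rw [happ]
    rw [Multiset.count_add, Multiset.count_sub]
    rw [Multiset.map_add, Multiset.map_add, Multiset.sum_add, Multiset.sum_add,
      Multiset.count_add, Multiset.count_add]
    have hde : (P.demand R 0).count o = (((R 0).map PRule.fromSelf).sum).count o := by
      rw [demand_eq]
    have hse : (P.supply R 0).count o = (((R 0).map PRule.fromOuter).sum).count o := by
      rw [supply_eq, htos]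
    rw [demand_eq] at hdle
    omega
  · intro a ha
    have hBa := hB a ha
    have hele : (P.envDemand R).count a ≤ c.env.count a := henv a ha
    have happ : (P.applySel c R).env = c.env - P.envDemand R + P.envSupply R := rfl
    rw [happ]
    rw [Multiset.count_add, Multiset.count_sub]
    rw [Multiset.map_add, Multiset.map_add, Multiset.sum_add, Multiset.sum_add,
      Multiset.count_add, Multiset.count_add]
    have hde : (P.envDemand R).count a = (((R 0).map PRule.fromOuter).sum).count a := by
      rw [envDemand_eq]
    have hse : (P.envSupply R).count a = (((R 0).map PRule.fromSelf).sum).count a := by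
      rw [envSupply_eq, htoo]
    rw [envDemand_eq] at hele
    omega

private lemma GoodC_reaches (P : PSystem 1 k) (hsym : P.SymOnly) {c : PConfig 1 k}
    (h : P.Reaches P.init c) : ∃ C, GoodC P c C := by
  have h' : Relation.ReflTransGen P.Step P.init c := h
  clear h
  induction h' with
  | refl => exact ⟨0, GoodC_init P⟩
  | tail hab hbc ih =>
      obtain ⟨C, hC⟩ := ih
      exact GoodC_step P hsym hC hbc

private lemma halted_blocked (P : PSystem 1 k) {c : PConfig 1 k} (hH : P.Halted c) :
    ∀ r ∈ P.rules 0, ¬(r.fromSelf ≤ c.regions 0 ∧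
      ∀ a, a ∉ P.E → (r.fromOuter).count a ≤ c.env.count a) := by
  rintro r hr ⟨h1, h2⟩
  refine hH 0 r hr ⟨?_, ?_, ?_⟩
  · intro j r' hr'
    have hj : j = 0 := Subsingleton.elim _ _
    subst hj
    simp only [Function.update_self] at hr'
    rwa [Multiset.mem_singleton.1 hr']
  · intro j
    have hj : j = 0 := Subsingleton.elim _ _
    subst hj
    rw [demand_eq]
    simpa using h1
  · intro a ha
    rw [envDemand_eq]
    simpa using h2 a ha

private lemma halted_card_le (P : PSystem 1 k) (hsym : P.SymOnly) (hbd : P.SymBound 2)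
    (c : PConfig 1 k) (C : Multiset (PRule k)) (hC : GoodC P c C) (hH : P.Halted c) :
    (c.regions 0).card ≤ 4 * (P.w 0).card := by
  obtain ⟨hCr, hCl, hA, hB⟩ := hC
  set E := P.E with hE
  set u := c.regions 0 with hu
  set v := c.env with hv
  set W := P.w 0 with hW
  have hcons : ∀ a, a ∉ E → u.count a + v.count a = W.count a := by
    intro a ha
    have h1 := hA a
    have h2 := hB a ha
    omega
  have hb := halted_blocked P hH
  set FO := ((C.map PRule.fromOuter).sum) with hFO
  set FS := ((C.map PRule.fromSelf).sum) with hFS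
  -- summed in-rule inequality
  have hIn : ∀ r ∈ C,
      ((∑ a, if a ∈ E then (PRule.fromOuter r).count a else 0) +
        ∑ a, if a ∉ E ∧ u.count a = 0 then (PRule.fromOuter r).count a else 0) ≤
        ∑ a, if a ∉ E ∧ v.count a = 0 then (PRule.fromOuter r).count a else 0 := by
    intro r hr
    have hrr := hCr r hr
    have hs := hsym 0 r hrr
    cases r with
    | symIn x =>
        refine in_ineq E u v W _ (fun a ha => (hCl _ hr a ha).2) hcons ?_ ?_
        · have := hbd 0 _ hrr hs
          simpa [PRule.size, PRule.fromOuter] using this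
        · have hnb : ¬ ∀ a, a ∉ P.E →
              (PRule.fromOuter (PRule.symIn x)).count a ≤ c.env.count a := by
            intro hcontra
            exact hb _ hrr ⟨by simp [PRule.fromSelf], hcontra⟩
          push_neg at hnb
          obtain ⟨o, ho1, ho2⟩ := hnb
          exact ⟨o, ho1, ho2⟩
    | symOut y =>
        simp [PRule.fromOuter]
    | anti y x => exact (hs : False).elim
  have hOut : ∀ r ∈ C,
      (∑ a, if a ∉ E ∧ v.count a = 0 then (PRule.fromSelf r).count a else 0) ≤
        (∑ a, if a ∉ E ∧ u.count a = 0 then (PRule.fromSelf r).count a else 0) +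
        ∑ a, if a ∈ E ∧ u.count a = 0 then (PRule.fromSelf r).count a else 0 := by
    intro r hr
    have hrr := hCr r hr
    have hs := hsym 0 r hrr
    cases r with
    | symIn x =>
        simp [PRule.fromSelf]
    | symOut y =>
        refine out_ineq E u v W _ (fun a ha => (hCl _ hr a ha).1) hcons ?_ ?_
        · have := hbd 0 _ hrr hs
          simpa [PRule.size, PRule.fromSelf] using this
        · have hnb : ¬ PRule.fromSelf (PRule.symOut y) ≤ c.regions 0 := by
            intro hcontra
            exact hb _ hrr ⟨hcontra, fun a ha => by simp [PRule.fromOuter]⟩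
          rw [Multiset.le_iff_count] at hnb
          push_neg at hnb
          exact hnb
    | anti y x => exact (hs : False).elim
  -- sum the per-instance inequalities over C
  have h1 : (∑ a, if a ∈ E then FO.count a else 0) +
      (∑ a, if a ∉ E ∧ u.count a = 0 then FO.count a else 0) ≤
      ∑ a, if a ∉ E ∧ v.count a = 0 then FO.count a else 0 := by
    have hsum := Multiset.sum_map_le_sum_map
      (fun r => (∑ a, if a ∈ E then (PRule.fromOuter r).count a else 0) +
        ∑ a, if a ∉ E ∧ u.count a = 0 then (PRule.fromOuter r).count a else 0)
      (fun r => ∑ a, if a ∉ E ∧ v.count a = 0 then (PRule.fromOuter r).count a else 0)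
      hIn
    rw [sum_count_filter] at hsum
    have hsplit : (C.map fun r =>
        (∑ a, if a ∈ E then (PRule.fromOuter r).count a else 0) +
        ∑ a, if a ∉ E ∧ u.count a = 0 then (PRule.fromOuter r).count a else 0).sum
      = (C.map fun r => ∑ a, if a ∈ E then (PRule.fromOuter r).count a else 0).sum +
        (C.map fun r =>
          ∑ a, if a ∉ E ∧ u.count a = 0 then (PRule.fromOuter r).count a else 0).sum := by
      rw [← Multiset.sum_map_add]
    rw [hsplit, sum_count_filter, sum_count_filter] at hsum
    exact hsum
  have h2 : (∑ a, if a ∉ E ∧ v.count a = 0 then FS.count a else 0) ≤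
      (∑ a, if a ∉ E ∧ u.count a = 0 then FS.count a else 0) +
      ∑ a, if a ∈ E ∧ u.count a = 0 then FS.count a else 0 := by
    have hsum := Multiset.sum_map_le_sum_map
      (fun r => ∑ a, if a ∉ E ∧ v.count a = 0 then (PRule.fromSelf r).count a else 0)
      (fun r => (∑ a, if a ∉ E ∧ u.count a = 0 then (PRule.fromSelf r).count a else 0) +
        ∑ a, if a ∈ E ∧ u.count a = 0 then (PRule.fromSelf r).count a else 0)
      hOut
    rw [sum_count_filter] at hsum
    have hsplit : (C.map fun r =>
        (∑ a, if a ∉ E ∧ u.count a = 0 then (PRule.fromSelf r).count a else 0) +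
        ∑ a, if a ∈ E ∧ u.count a = 0 then (PRule.fromSelf r).count a else 0).sum
      = (C.map fun r =>
          ∑ a, if a ∉ E ∧ u.count a = 0 then (PRule.fromSelf r).count a else 0).sum +
        (C.map fun r =>
          ∑ a, if a ∈ E ∧ u.count a = 0 then (PRule.fromSelf r).count a else 0).sum := by
      rw [← Multiset.sum_map_add]
    rw [hsplit, sum_count_filter, sum_count_filter] at hsum
    exact hsum
  -- flow identities
  have h3 : (∑ a, if a ∉ E ∧ v.count a = 0 then FO.count a else 0)
      = ∑ a, if a ∉ E ∧ v.count a = 0 then FS.count a else 0 := by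
    refine Finset.sum_congr rfl fun a _ => ?_
    split_ifs with h
    · have := hB a h.1
      omega
    · rfl
  have h4 : (∑ a, if a ∉ E ∧ u.count a = 0 then FS.count a else 0)
      = (∑ a, if a ∉ E ∧ u.count a = 0 then v.count a else 0) +
        ∑ a, if a ∉ E ∧ u.count a = 0 then FO.count a else 0 := by
    rw [← sum_ite_add]
    refine Finset.sum_congr rfl fun a _ => ?_
    split_ifs with h
    · have := hB a h.1
      omega
    · rfl
  have h5 : (∑ a, if a ∉ E ∧ u.count a = 0 then v.count a else 0) ≤ W.card := by
    rw [card_eq_sum_count]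
    refine Finset.sum_le_sum fun a _ => ?_
    split_ifs with h
    · have := hcons a h.1
      omega
    · exact Nat.zero_le _
  have h6 : (∑ a, if a ∈ E ∧ u.count a = 0 then FS.count a else 0)
      = (∑ a, if a ∈ E ∧ u.count a = 0 then W.count a else 0) +
        ∑ a, if a ∈ E ∧ u.count a = 0 then FO.count a else 0 := by
    rw [← sum_ite_add]
    refine Finset.sum_congr rfl fun a _ => ?_
    split_ifs with h
    · have := hA a
      omega
    · rfl
  have h7 : (∑ a, if a ∈ E ∧ u.count a = 0 then W.count a else 0) ≤ W.card := by
    rw [card_eq_sum_count]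
    refine Finset.sum_le_sum fun a _ => ?_
    split_ifs <;> omega
  have h8 : (∑ a, if a ∈ E then FO.count a else 0)
      = (∑ a, if a ∈ E ∧ u.count a = 0 then FO.count a else 0) +
        ∑ a, if a ∈ E ∧ u.count a ≠ 0 then FO.count a else 0 := by
    rw [← Finset.sum_add_distrib]
    refine Finset.sum_congr rfl fun a _ => ?_
    by_cases haE : a ∈ E
    · by_cases hu0 : u.count a = 0 <;> simp [haE, hu0]
    · simp [haE]
  have h9 : u.card = (∑ a, if a ∉ E then u.count a else 0) +
      ∑ a, if a ∈ E ∧ u.count a ≠ 0 then u.count a else 0 := by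
    rw [card_eq_sum_count, ← Finset.sum_add_distrib]
    refine Finset.sum_congr rfl fun a _ => ?_
    by_cases haE : a ∈ E
    · by_cases hu0 : u.count a = 0 <;> simp [haE, hu0]
    · simp [haE]
  have h10 : (∑ a, if a ∉ E then u.count a else 0) ≤ W.card := by
    rw [card_eq_sum_count]
    refine Finset.sum_le_sum fun a _ => ?_
    by_cases h : a ∈ E
    · simp [h]
    · have := hcons a h
      simp [h]
      omega
  have h11 : (∑ a, if a ∈ E ∧ u.count a ≠ 0 then u.count a else 0) ≤
      (∑ a, if a ∈ E ∧ u.count a ≠ 0 then W.count a else 0) +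
      ∑ a, if a ∈ E ∧ u.count a ≠ 0 then FO.count a else 0 := by
    rw [← sum_ite_add]
    refine Finset.sum_le_sum fun a _ => ?_
    split_ifs with h
    · have := hA a
      omega
    · exact le_rfl
  have h12 : (∑ a, if a ∈ E ∧ u.count a ≠ 0 then W.count a else 0) ≤ W.card := by
    rw [card_eq_sum_count]
    refine Finset.sum_le_sum fun a _ => ?_
    split_ifs <;> omega
  omega

private theorem NSet_finite (P : PSystem 1 k) (hsym : P.SymOnly) (hbd : P.SymBound 2) :
    P.NSet.Finite := by
  apply Set.Finite.subset (Set.finite_Iic (4 * (P.w 0).card))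
  rintro m ⟨c, hreach, hhalt, rfl⟩
  have h0 : P.i0 = 0 := Subsingleton.elim _ _
  obtain ⟨C, hC⟩ := GoodC_reaches P hsym hreach
  have := halted_card_le P hsym hbd c C hC hhalt
  simpa [h0, Set.mem_Iic] using this

end NOPFinProof

/-- `NOP_1(sym_2) ⊆ NFIN`: every set of natural numbers
generated by a P system with symport/antiport of degree 1 using only symport
rules of size at most 2 (minimal symport) is finite. -/
theorem NOP_one_sym_two_subset_NFIN : NOPsym 1 2 ⊆ NFIN := by
  rintro S ⟨m, hm1, hm2, k, P, hsym, hbd, rfl⟩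
  obtain rfl : m = 1 := le_antisymm hm2 hm1
  exact NSet_finite P hsym hbd
end

section
/- Every set of natural numbers computed by a tissue P system of degree 1 whose symport rules have size at most 1 and whose antiport rules have size at most 2, or by a tissue P system of degree 1 using only symport rules of size at most 2, is finite; that is, NOtP_1(sym_1, anti_2) ∪ NOtP_1(sym_2) ⊆ NFIN. -/
/-- Rules of a tissue P system with symport/antiport with `n` cells over the
alphabet `Fin k`.  Nodes are elements of `Fin (n+1)`, node `0` being the
environment.  `sym i j x` is the symport rule `(i, x, j)` moving the multiset
`x` from node `i` to node `j`; `anti i j x y` is the antiport rule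
`(i, x/y, j)` exchanging the multiset `x` in node `i` with the multiset `y`
in node `j`. -/
inductive TRule (n k : ℕ) : Type where
  | sym (i j : Fin (n+1)) (x : Multiset (Fin k)) : TRule n k
  | anti (i j : Fin (n+1)) (x y : Multiset (Fin k)) : TRule n k
  deriving DecidableEq

namespace TRule

variable {n k : ℕ}

/-- The rule is a symport rule. -/
def IsSym : TRule n k → Prop
  | sym _ _ _ => True
  | anti _ _ _ _ => False

/-- The rule is an antiport rule. -/
def IsAnti : TRule n k → Prop
  | sym _ _ _ => False
  | anti _ _ _ _ => True

/-- The size of a rule: `|x|` for a symport rule `(i,x,j)` and `|x| + |y|`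
for an antiport rule `(i,x/y,j)`. -/
def size : TRule n k → ℕ
  | sym _ _ x => Multiset.card x
  | anti _ _ x y => Multiset.card x + Multiset.card y

/-- The objects the rule consumes at node `v`. -/
def consume : TRule n k → Fin (n+1) → Multiset (Fin k)
  | sym i _ x, v => if v = i then x else 0
  | anti i j x y, v => (if v = i then x else 0) + (if v = j then y else 0)

/-- The objects the rule produces at node `v`. -/
def produce : TRule n k → Fin (n+1) → Multiset (Fin k)
  | sym _ j x, v => if v = j then x else 0
  | anti i j x y, v => (if v = i then y else 0) + (if v = j then x else 0)

/-- The first node of the rule. -/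
def src : TRule n k → Fin (n+1)
  | sym i _ _ => i
  | anti i _ _ _ => i

/-- The second node of the rule. -/
def dst : TRule n k → Fin (n+1)
  | sym _ j _ => j
  | anti _ j _ _ => j

end TRule

/-- A tissue P system with symport/antiport of degree `n` (that is, with `n`
cells) over the alphabet `Fin k` (so the alphabet `O` has exactly `k`
objects).  The nodes of the underlying graph are `0, …, n`, node `0` being
the environment; the graph itself is deduced from the set of rules. -/
structure TPSystem (n k : ℕ) : Type where
  /-- the initial multiset of each cell -/
  w : Fin n → Multiset (Fin k)
  /-- the objects occurring in the environment in infinitely many copies -/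
  E : Finset (Fin k)
  /-- the finite set of rules -/
  rules : Finset (TRule n k)
  /-- rules move non-empty multisets between distinct nodes, and symport
  rules `(0, x, j)` with `x ∈ E⁺` are forbidden -/
  rules_ok : ∀ r ∈ rules,
    (match r with
      | TRule.sym i j x => i ≠ j ∧ x ≠ 0 ∧ ¬ (i = 0 ∧ ∀ a ∈ x, a ∈ E)
      | TRule.anti i j x y => i ≠ j ∧ x ≠ 0 ∧ y ≠ 0)
  /-- the output cell -/
  i0 : Fin n

/-- A configuration of a tissue P system: the contents of each node.  For the
environment (node `0`) only the finitely-occurring objects are recorded;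
objects of `E` are present there in infinitely many copies. -/
abbrev TConfig (n k : ℕ) := Fin (n+1) → Multiset (Fin k)

namespace TPSystem

variable {n k : ℕ} (P : TPSystem n k)

/-- The multiset of objects a multiset of rule instances removes from node `v`. -/
def demand (R : Multiset (TRule n k)) (v : Fin (n+1)) : Multiset (Fin k) :=
  (R.map (fun r => r.consume v)).sum

/-- The multiset of objects a multiset of rule instances puts into node `v`. -/
def supply (R : Multiset (TRule n k)) (v : Fin (n+1)) : Multiset (Fin k) :=
  (R.map (fun r => r.produce v)).sum

/-- A multiset of rule instances is applicable in configuration `c`: it uses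
only rules of the system and all consumed objects are available (objects of
`E` are available in the environment in any quantity). -/
def Applicable (c : TConfig n k) (R : Multiset (TRule n k)) : Prop :=
  (∀ r ∈ R, r ∈ P.rules) ∧
  (∀ v : Fin (n+1), v ≠ 0 → demand R v ≤ c v) ∧
  (∀ a : Fin k, a ∉ P.E → (demand R 0).count a ≤ (c 0).count a)

/-- The configuration obtained by applying a multiset of rule instances. -/
def applySel (c : TConfig n k) (R : Multiset (TRule n k)) : TConfig n k :=
  fun v => c v - demand R v + supply R v

/-- The multiset of rule instances `R` is applicable and maximal: no further
rule instance can be added while remaining applicable. -/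
def MaxApplicable (c : TConfig n k) (R : Multiset (TRule n k)) : Prop :=
  P.Applicable c R ∧ ∀ r ∈ P.rules, ¬ P.Applicable c (R + {r})

/-- One computation step: a non-empty maximal applicable multiset of rule
instances is applied (non-deterministic maximal parallelism). -/
def Step (c c' : TConfig n k) : Prop :=
  ∃ R : Multiset (TRule n k), P.MaxApplicable c R ∧ R ≠ 0 ∧ c' = applySel c R

/-- A configuration is halting when no rule instance is applicable in it. -/
def Halted (c : TConfig n k) : Prop :=
  ∀ r ∈ P.rules, ¬ P.Applicable c {r}

/-- The initial configuration: cell `i` contains `w i`, the environment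
contains nothing besides the objects of `E`. -/
def init : TConfig n k := Fin.cons 0 P.w

/-- Reachability by computation steps. -/
def Reaches : TConfig n k → TConfig n k → Prop :=
  Relation.ReflTransGen P.Step

/-- The set of natural numbers computed by the system, i.e., the numbers of
objects present in the output cell in the halting configurations reachable
from the initial configuration. -/
def NSet : Set ℕ :=
  { m | ∃ c : TConfig n k, P.Reaches P.init c ∧ P.Halted c ∧
      Multiset.card (c P.i0.succ) = m }

/-- All symport rules of the system have size at most `p`. -/
def SymBound (p : ℕ) : Prop := ∀ r ∈ P.rules, r.IsSym → r.size ≤ p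

/-- All antiport rules of the system have size at most `q`. -/
def AntiBound (q : ℕ) : Prop := ∀ r ∈ P.rules, r.IsAnti → r.size ≤ q

/-- The system uses only symport rules. -/
def SymOnly : Prop := ∀ r ∈ P.rules, r.IsSym

/-- The system uses only antiport rules. -/
def AntiOnly : Prop := ∀ r ∈ P.rules, r.IsAnti

end TPSystem

/-- `NOtP_n(sym_p, anti_q)`: the family of sets of natural numbers computed by
tissue P systems with symport/antiport of degree at most `n`, with symport
rules of size at most `p` and antiport rules of size at most `q`. -/
def NOtP (n p q : ℕ) : Set (Set ℕ) :=
  { S | ∃ m : ℕ, 1 ≤ m ∧ m ≤ n ∧ ∃ (k : ℕ) (P : TPSystem m k),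
      P.SymBound p ∧ P.AntiBound q ∧ S = P.NSet }

/-- `NOtP_n(sym_p)`: the family of sets of natural numbers computed by tissue
P systems with symport/antiport of degree at most `n` using only symport rules
of size at most `p`. -/
def NOtPsym (n p : ℕ) : Set (Set ℕ) :=
  { S | ∃ m : ℕ, 1 ≤ m ∧ m ≤ n ∧ ∃ (k : ℕ) (P : TPSystem m k),
      P.SymOnly ∧ P.SymBound p ∧ S = P.NSet }

/-- `NOtP_n(anti_q)`: the family of sets of natural numbers computed by tissue
P systems with symport/antiport of degree at most `n` using only antiport
rules of size at most `q`. -/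
def NOtPanti (n q : ℕ) : Set (Set ℕ) :=
  { S | ∃ m : ℕ, 1 ≤ m ∧ m ≤ n ∧ ∃ (k : ℕ) (P : TPSystem m k),
      P.AntiOnly ∧ P.AntiBound q ∧ S = P.NSet }


/-! ### Auxiliary machinery for the proof -/

namespace MinTissue

open Multiset

variable {k : ℕ}

/-- Weighted sum of a multiset of objects. -/
def W (f : Fin k → ℕ) (m : Multiset (Fin k)) : ℕ := (m.map f).sum

lemma W_zero (f : Fin k → ℕ) : W f 0 = 0 := rfl

lemma W_add (f : Fin k → ℕ) (m n : Multiset (Fin k)) : W f (m + n) = W f m + W f n := by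
  simp [W]

lemma W_singleton (f : Fin k → ℕ) (a : Fin k) : W f {a} = f a := by simp [W]

lemma W_pair (f : Fin k → ℕ) (a b : Fin k) : W f {a, b} = f a + f b := by
  simp [W]

lemma W_eq_sum_count (f : Fin k → ℕ) (m : Multiset (Fin k)) :
    W f m = ∑ a : Fin k, m.count a * f a := by
  induction m using Multiset.induction_on with
  | empty => simp [W]
  | cons x m ih =>
    rw [W, Multiset.map_cons, Multiset.sum_cons, ← W, ih]
    have : ∀ a : Fin k, (x ::ₘ m).count a * f a
        = m.count a * f a + (if a = x then f a else 0) := by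
      intro a
      by_cases h : a = x
      · subst h; simp [Multiset.count_cons_self, Nat.add_mul]
      · simp [Multiset.count_cons_of_ne h, h]
    rw [Finset.sum_congr rfl (fun a _ => this a), Finset.sum_add_distrib]
    simp [Finset.sum_ite_eq' Finset.univ x f, add_comm]

lemma card_le_W {f : Fin k → ℕ} (hf : ∀ a, 1 ≤ f a) (m : Multiset (Fin k)) :
    Multiset.card m ≤ W f m := by
  induction m using Multiset.induction_on with
  | empty => simp [W]
  | cons x m ih =>
    rw [W, Multiset.map_cons, Multiset.sum_cons, ← W]
    have := hf x
    simp only [Multiset.card_cons]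
    omega

lemma W_le_two_card {f : Fin k → ℕ} (hf : ∀ a, f a ≤ 2) (m : Multiset (Fin k)) :
    W f m ≤ 2 * Multiset.card m := by
  induction m using Multiset.induction_on with
  | empty => simp [W]
  | cons x m ih =>
    rw [W, Multiset.map_cons, Multiset.sum_cons, ← W]
    have := hf x
    simp only [Multiset.card_cons]
    omega

lemma W_sum (f : Fin k → ℕ) (S : Multiset (Multiset (Fin k))) :
    W f S.sum = (S.map (W f)).sum := by
  induction S using Multiset.induction_on with
  | empty => simp [W]
  | cons x S ih => simp [W_add, ih]

lemma fin2_cases (v : Fin 2) : v = 0 ∨ v = 1 := by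
  fin_cases v
  · exact Or.inl rfl
  · exact Or.inr rfl

variable {P : TPSystem 1 k}

lemma demand_singleton (r : TRule 1 k) (v : Fin 2) :
    TPSystem.demand {r} v = r.consume v := by
  simp [TPSystem.demand]

/-- From a halting configuration, no single rule of the system is applicable. -/
lemma halted_single {c : TConfig 1 k} (hh : P.Halted c) {r : TRule 1 k}
    (hr : r ∈ P.rules) (H1 : r.consume 1 ≤ c 1)
    (H0 : ∀ a, a ∉ P.E → (r.consume 0).count a ≤ (c 0).count a) : False := by
  apply hh r hr
  refine ⟨by simp [hr], ?_, ?_⟩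
  · intro v hv
    rcases fin2_cases v with rfl | rfl
    · exact absurd rfl hv
    · rw [demand_singleton]; exact H1
  · intro a ha
    rw [demand_singleton]; exact H0 a ha

/-- Each computation step conserves the total number of copies of each
object not in `E`. -/
lemma step_conserve {c c' : TConfig 1 k} (hst : P.Step c c') :
    ∀ a, a ∉ P.E → (c' 0).count a + (c' 1).count a = (c 0).count a + (c 1).count a := by
  obtain ⟨R, ⟨⟨hmem, hle, henv⟩, -⟩, -, rfl⟩ := hst
  intro a ha
  have hflow : ∀ r : TRule 1 k,
      (r.consume 0).count a + (r.consume 1).count a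
        = (r.produce 0).count a + (r.produce 1).count a := by
    intro r
    cases r with
    | sym i j x =>
      rcases fin2_cases i with rfl | rfl <;> rcases fin2_cases j with rfl | rfl <;>
        simp [TRule.consume, TRule.produce]
    | anti i j x y =>
      rcases fin2_cases i with rfl | rfl <;> rcases fin2_cases j with rfl | rfl <;>
        simp [TRule.consume, TRule.produce] <;> omega
  have hsum : ∀ v : Fin 2, (TPSystem.demand R v).count a = (R.map (fun r => (r.consume v).count a)).sum := by
    intro v; exact Multiset.count_sum
  have hsum' : ∀ v : Fin 2, (TPSystem.supply R v).count a = (R.map (fun r => (r.produce v).count a)).sum := by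
    intro v; exact Multiset.count_sum
  have hDS : (TPSystem.demand R 0).count a + (TPSystem.demand R 1).count a
      = (TPSystem.supply R 0).count a + (TPSystem.supply R 1).count a := by
    rw [hsum 0, hsum 1, hsum' 0, hsum' 1, ← Multiset.sum_map_add, ← Multiset.sum_map_add]
    congr 1
    exact Multiset.map_congr rfl (fun r _ => hflow r)
  have h1 : (TPSystem.demand R 1).count a ≤ (c 1).count a :=
    Multiset.count_le_of_le a (hle 1 (by decide))
  have h0 : (TPSystem.demand R 0).count a ≤ (c 0).count a := henv a ha
  simp only [TPSystem.applySel, Multiset.count_add, Multiset.count_sub]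
  omega

lemma reaches_count {c : TConfig 1 k} (hre : P.Reaches P.init c) :
    ∀ a, a ∉ P.E → (c 0).count a + (c 1).count a = (P.w 0).count a := by
  induction hre with
  | refl =>
    intro a ha
    have h0 : P.init 0 = 0 := rfl
    have h1 : P.init 1 = P.w 0 := rfl
    rw [h0, h1]; simp
  | tail hab hbc ih =>
    intro a ha
    rw [step_conserve hbc a ha, ih a ha]

/-- One-step monotonicity of the weighted potential, given the per-rule
inequality. -/
lemma step_psi (α β : Fin k → ℕ)
    (Hinst : ∀ r ∈ P.rules,
      (∀ a, a ∉ P.E → (r.consume 0).count a + (r.consume 1).count a ≤ (P.w 0).count a) →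
      W α (r.produce 1) + W (fun x => if x ∈ P.E then 0 else β x) (r.produce 0)
        ≤ W α (r.consume 1) + W (fun x => if x ∈ P.E then 0 else β x) (r.consume 0))
    {c c' : TConfig 1 k} (hst : P.Step c c')
    (hcons : ∀ a, a ∉ P.E → (c 0).count a + (c 1).count a = (P.w 0).count a) :
    W α (c' 1) + W (fun x => if x ∈ P.E then 0 else β x) (c' 0)
      ≤ W α (c 1) + W (fun x => if x ∈ P.E then 0 else β x) (c 0) := by
  set β' : Fin k → ℕ := fun x => if x ∈ P.E then 0 else β x with hβ'
  obtain ⟨R, ⟨⟨hmem, hle, henv⟩, -⟩, -, rfl⟩ := hst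
  have h1le : TPSystem.demand R 1 ≤ c 1 := hle 1 (by decide)
  -- instance-level availability
  have hinstle : ∀ r ∈ R, ∀ v : Fin 2, r.consume v ≤ TPSystem.demand R v := by
    intro r hr v
    apply Multiset.single_le_sum (fun x _ => Multiset.zero_le x)
    exact Multiset.mem_map_of_mem _ hr
  have hptwise : ∀ r ∈ R,
      W α (r.produce 1) + W β' (r.produce 0) ≤ W α (r.consume 1) + W β' (r.consume 0) := by
    intro r hr
    apply Hinst r (hmem r hr)
    intro a ha
    have t0 : (r.consume 0).count a ≤ (c 0).count a :=
      le_trans (Multiset.count_le_of_le a (hinstle r hr 0)) (henv a ha)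
    have t1 : (r.consume 1).count a ≤ (c 1).count a :=
      le_trans (Multiset.count_le_of_le a (hinstle r hr 1)) (Multiset.count_le_of_le a h1le)
    have := hcons a ha
    omega
  -- sum the pointwise inequality over R
  have hdagger : W α (TPSystem.supply R 1) + W β' (TPSystem.supply R 0)
      ≤ W α (TPSystem.demand R 1) + W β' (TPSystem.demand R 0) := by
    rw [TPSystem.supply, TPSystem.supply, TPSystem.demand, TPSystem.demand,
      W_sum, W_sum, W_sum, W_sum, Multiset.map_map, Multiset.map_map,
      Multiset.map_map, Multiset.map_map, ← Multiset.sum_map_add, ← Multiset.sum_map_add]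
    exact Multiset.sum_map_le_sum_map _ _ hptwise
  -- cell equality
  have hcell : W α (c 1 - TPSystem.demand R 1 + TPSystem.supply R 1) + W α (TPSystem.demand R 1)
      = W α (c 1) + W α (TPSystem.supply R 1) := by
    have : c 1 - TPSystem.demand R 1 + TPSystem.supply R 1 + TPSystem.demand R 1 = c 1 + TPSystem.supply R 1 := by
      rw [add_right_comm, tsub_add_cancel_of_le h1le]
    calc W α (c 1 - TPSystem.demand R 1 + TPSystem.supply R 1) + W α (TPSystem.demand R 1)
        = W α (c 1 - TPSystem.demand R 1 + TPSystem.supply R 1 + TPSystem.demand R 1) := (W_add _ _ _).symm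
      _ = W α (c 1 + TPSystem.supply R 1) := by rw [this]
      _ = W α (c 1) + W α (TPSystem.supply R 1) := W_add _ _ _
  -- environment equality (using that β' vanishes on E)
  have henveq : W β' (c 0 - TPSystem.demand R 0 + TPSystem.supply R 0) + W β' (TPSystem.demand R 0)
      = W β' (c 0) + W β' (TPSystem.supply R 0) := by
    rw [W_eq_sum_count, W_eq_sum_count, W_eq_sum_count, W_eq_sum_count,
      ← Finset.sum_add_distrib, ← Finset.sum_add_distrib]
    apply Finset.sum_congr rfl
    intro a _
    by_cases ha : a ∈ P.E
    · simp [hβ', ha]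
    · have hd : (TPSystem.demand R 0).count a ≤ (c 0).count a := henv a ha
      simp only [Multiset.count_add, Multiset.count_sub, ← Nat.add_mul]
      congr 1
      omega
  have happ1 : (TPSystem.applySel c R) 1 = c 1 - TPSystem.demand R 1 + TPSystem.supply R 1 := rfl
  have happ0 : (TPSystem.applySel c R) 0 = c 0 - TPSystem.demand R 0 + TPSystem.supply R 0 := rfl
  rw [happ1, happ0]
  omega

/-- Potential bound along reachability. -/
lemma reaches_psi (α β : Fin k → ℕ)
    (Hinst : ∀ r ∈ P.rules,
      (∀ a, a ∉ P.E → (r.consume 0).count a + (r.consume 1).count a ≤ (P.w 0).count a) →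
      W α (r.produce 1) + W (fun x => if x ∈ P.E then 0 else β x) (r.produce 0)
        ≤ W α (r.consume 1) + W (fun x => if x ∈ P.E then 0 else β x) (r.consume 0))
    {c : TConfig 1 k} (hre : P.Reaches P.init c) :
    W α (c 1) + W (fun x => if x ∈ P.E then 0 else β x) (c 0) ≤ W α (P.w 0) := by
  induction hre with
  | refl =>
    have h0 : P.init 0 = 0 := rfl
    have h1 : P.init 1 = P.w 0 := rfl
    rw [h0, h1, W_zero]
    omega
  | tail hab hbc ih =>
    exact le_trans (step_psi α β Hinst hbc (reaches_count hab)) ih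

/-- The abstract bound: any weight system giving the per-rule inequality
bounds the halting cell contents. -/
lemma main_bound (α β : Fin k → ℕ) (hα1 : ∀ a, 1 ≤ α a) (hα2 : ∀ a, α a ≤ 2)
    {c : TConfig 1 k} (hre : P.Reaches P.init c)
    (Hinst : ∀ r ∈ P.rules,
      (∀ a, a ∉ P.E → (r.consume 0).count a + (r.consume 1).count a ≤ (P.w 0).count a) →
      W α (r.produce 1) + W (fun x => if x ∈ P.E then 0 else β x) (r.produce 0)
        ≤ W α (r.consume 1) + W (fun x => if x ∈ P.E then 0 else β x) (r.consume 0)) :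
    Multiset.card (c 1) ≤ 2 * Multiset.card (P.w 0) := by
  have h1 := card_le_W hα1 (c 1)
  have h2 := reaches_psi α β Hinst hre
  have h3 := W_le_two_card hα2 (P.w 0)
  omega


lemma count_pair (t a b : Fin k) :
    Multiset.count t ({a, b} : Multiset (Fin k))
      = (if t = a then 1 else 0) + (if t = b then 1 else 0) := by
  rw [show ({a, b} : Multiset (Fin k)) = a ::ₘ {b} from rfl, Multiset.count_cons,
    Multiset.count_singleton]
  omega

/-- Per-rule weight inequality for systems with symport of size 1 and
antiport of size 2 (case A). -/
lemma instA {c : TConfig 1 k} (hh : P.Halted c)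
    (hsym : P.SymBound 1) (hanti : P.AntiBound 2)
    (hcons : ∀ a, a ∉ P.E → (c 0).count a + (c 1).count a = (P.w 0).count a) :
    ∀ r ∈ P.rules,
      (∀ a, a ∉ P.E → (r.consume 0).count a + (r.consume 1).count a ≤ (P.w 0).count a) →
      W (fun t => if t ∈ P.E then 1 else if 0 < (c 1).count t then 1 else 2) (r.produce 1)
        + W (fun t => if t ∈ P.E then 0 else (fun _ : Fin k => 1) t) (r.produce 0)
      ≤ W (fun t => if t ∈ P.E then 1 else if 0 < (c 1).count t then 1 else 2) (r.consume 1)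
        + W (fun t => if t ∈ P.E then 0 else (fun _ : Fin k => 1) t) (r.consume 0) := by
  intro r hr hav
  have hok := P.rules_ok r hr
  cases r with
  | sym i j x =>
    obtain ⟨hij, hx0, hE⟩ := hok
    have hcard : Multiset.card x = 1 := by
      have h1 := hsym _ hr trivial
      have h2 : 0 < Multiset.card x := Multiset.card_pos.mpr hx0
      simp only [TRule.size] at h1
      omega
    obtain ⟨a, rfl⟩ := Multiset.card_eq_one.mp hcard
    rcases fin2_cases i with rfl | rfl <;> rcases fin2_cases j with rfl | rfl
    · exact absurd rfl hij
    · -- import rule (0, {a}, 1)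
      have haE : a ∉ P.E := by
        have h := not_and.mp hE rfl
        simpa using h
      have hc0 : (c 0).count a = 0 := by
        by_contra hpos
        apply halted_single hh hr (by simp [TRule.consume])
        intro b hb
        have hcc : (TRule.sym (0 : Fin 2) 1 {a}).consume 0 = {a} := by simp [TRule.consume]
        rw [hcc, Multiset.count_singleton]
        by_cases hba : b = a
        · subst hba; rw [if_pos rfl]; omega
        · rw [if_neg hba]; omega
      have hT : 1 ≤ (c 1).count a := by
        have h1 := hav a haE
        have h2 := hcons a haE
        simp only [TRule.consume] at h1
        simp at h1
        omega
      have hp : 0 < Multiset.count a (c 1) := hT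
      simp [TRule.consume, TRule.produce, W_singleton, W_zero, haE, hp]
    · -- export rule (1, {a}, 0)
      simp only [TRule.consume, TRule.produce]
      simp only [show ((0:Fin 2) = 1) = False by simp, show ((1:Fin 2) = 1) = True by simp,
        show ((0:Fin 2) = 0) = True by simp, show ((1:Fin 2) = 0) = False by simp,
        if_true, if_false]
      rw [W_singleton, W_singleton, W_zero, W_zero]
      by_cases haE : a ∈ P.E <;> simp [haE] <;> split <;> omega
    · exact absurd rfl hij
  | anti i j x y =>
    obtain ⟨hij, hx0, hy0⟩ := hok
    have hsz := hanti _ hr trivial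
    simp only [TRule.size] at hsz
    have hcx : Multiset.card x = 1 := by
      have h2 : 0 < Multiset.card x := Multiset.card_pos.mpr hx0
      have h3 : 0 < Multiset.card y := Multiset.card_pos.mpr hy0
      omega
    have hcy : Multiset.card y = 1 := by
      have h2 : 0 < Multiset.card x := Multiset.card_pos.mpr hx0
      have h3 : 0 < Multiset.card y := Multiset.card_pos.mpr hy0
      omega
    obtain ⟨u', rfl⟩ := Multiset.card_eq_one.mp hcx
    obtain ⟨v', rfl⟩ := Multiset.card_eq_one.mp hcy
    -- normalize: u = cell-side object, v = environment-side object
    obtain ⟨u, v, hc1, hc0, hp1, hp0⟩ : ∃ u v : Fin k,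
        (TRule.anti i j {u'} {v'}).consume 1 = {u} ∧
        (TRule.anti i j {u'} {v'}).consume 0 = {v} ∧
        (TRule.anti i j {u'} {v'}).produce 1 = {v} ∧
        (TRule.anti i j {u'} {v'}).produce 0 = {u} := by
      rcases fin2_cases i with rfl | rfl <;> rcases fin2_cases j with rfl | rfl
      · exact absurd rfl hij
      · exact ⟨v', u', by simp [TRule.consume], by simp [TRule.consume],
          by simp [TRule.produce], by simp [TRule.produce]⟩
      · exact ⟨u', v', by simp [TRule.consume], by simp [TRule.consume],
          by simp [TRule.produce], by simp [TRule.produce]⟩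
      · exact absurd rfl hij
    rw [hc1, hc0, hp1, hp0, W_singleton, W_singleton, W_singleton, W_singleton]
    have hstuck : 0 < (c 1).count u → (v ∈ P.E ∨ 0 < (c 0).count v) → False := by
      intro hu hv
      apply halted_single hh hr
      · rw [hc1, Multiset.singleton_le]
        exact Multiset.count_pos.mp hu
      · intro b hb
        rw [hc0]
        by_cases hbv : b = v
        · subst hbv
          rcases hv with hv | hv
          · exact absurd hv hb
          · rw [Multiset.count_singleton, if_pos rfl]; omega
        · rw [Multiset.count_singleton, if_neg hbv]; omega
    have hTv : v ∉ P.E → 1 ≤ (c 0).count v + (c 1).count v := by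
      intro hv
      have h1 := hav v hv
      have h2 := hcons v hv
      rw [hc0, hc1] at h1
      rw [Multiset.count_singleton, if_pos rfl] at h1
      omega
    by_cases hvE : v ∈ P.E
    · by_cases huE : u ∈ P.E
      · simp [hvE, huE]
      · have hu0 : ¬ 0 < (c 1).count u := fun hu => hstuck hu (Or.inl hvE)
        simp [hvE, huE, hu0]
    · by_cases huE : u ∈ P.E
      · simp [hvE, huE]
        split <;> omega
      · by_cases hpv : 0 < (c 1).count v
        · simp only [if_neg hvE, if_neg huE, if_pos hpv]
          split <;> omega
        · have hv0 : 0 < (c 0).count v := by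
            have := hTv hvE
            omega
          have hu0 : ¬ 0 < (c 1).count u := fun hu => hstuck hu (Or.inr hv0)
          simp [hvE, huE, hpv, hu0]


/-- Case A: the halting contents of the cell are bounded. -/
lemma boundA (hs : P.SymBound 1) (ha : P.AntiBound 2) :
    P.NSet ⊆ Set.Iic (2 * Multiset.card (P.w 0)) := by
  rintro m ⟨c, hre, hh, rfl⟩
  have hi : P.i0.succ = (1 : Fin 2) := by rw [Fin.eq_zero P.i0]; rfl
  rw [Set.mem_Iic, hi]
  exact main_bound (fun t => if t ∈ P.E then 1 else if 0 < (c 1).count t then 1 else 2)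
    (fun _ => 1)
    (fun t => by split; · omega
                 · split <;> omega)
    (fun t => by split; · omega
                 · split <;> omega)
    hre (instA hh hs ha (reaches_count hre))

/-- Per-rule weight inequality for symport-only systems with rules of size at
most 2 (case B). -/
lemma instB {c : TConfig 1 k} (hh : P.Halted c)
    (hso : P.SymOnly) (hsym : P.SymBound 2)
    (hcons : ∀ a, a ∉ P.E → (c 0).count a + (c 1).count a = (P.w 0).count a) :
    ∀ r ∈ P.rules,
      (∀ a, a ∉ P.E → (r.consume 0).count a + (r.consume 1).count a ≤ (P.w 0).count a) →
      W (fun t => if t ∈ P.E then 2 else if 0 < (c 1).count t then 1 else 2) (r.produce 1)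
        + W (fun t => if t ∈ P.E then 0 else
            (fun u : Fin k => if 0 < (c 0).count u then (if 0 < (c 1).count u then 1 else 0) else 3) t)
          (r.produce 0)
      ≤ W (fun t => if t ∈ P.E then 2 else if 0 < (c 1).count t then 1 else 2) (r.consume 1)
        + W (fun t => if t ∈ P.E then 0 else
            (fun u : Fin k => if 0 < (c 0).count u then (if 0 < (c 1).count u then 1 else 0) else 3) t)
          (r.consume 0) := by
  intro r hr hav
  have hok := P.rules_ok r hr
  cases r with
  | anti i j x y => exact absurd (hso _ hr) (by simp [TRule.IsSym])
  | sym i j x =>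
    obtain ⟨hij, hx0, hE⟩ := hok
    have hsz := hsym _ hr trivial
    simp only [TRule.size] at hsz
    have hxpos : 0 < Multiset.card x := Multiset.card_pos.mpr hx0
    rcases fin2_cases i with rfl | rfl <;> rcases fin2_cases j with rfl | rfl
    · exact absurd rfl hij
    · -- import rule (0, x, 1)
      have hcc1 : (TRule.sym (0:Fin 2) 1 x).consume 1 = 0 := by simp [TRule.consume]
      have hcc0 : (TRule.sym (0:Fin 2) 1 x).consume 0 = x := by simp [TRule.consume]
      have hpp1 : (TRule.sym (0:Fin 2) 1 x).produce 1 = x := by simp [TRule.produce]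
      have hpp0 : (TRule.sym (0:Fin 2) 1 x).produce 0 = 0 := by simp [TRule.produce]
      rw [hcc1, hcc0, hpp1, hpp0, W_zero, W_zero]
      simp only [hcc1, hcc0] at hav
      have hwit : ∃ t, t ∉ P.E ∧ (c 0).count t < x.count t := by
        by_contra hcon
        push_neg at hcon
        exact halted_single hh hr (by rw [hcc1]; exact Multiset.zero_le _)
          (fun b hb => by rw [hcc0]; exact hcon b hb)
      obtain ⟨t, htE, htc⟩ := hwit
      have htx : 0 < x.count t := by omega
      have havt : x.count t ≤ (c 0).count t + (c 1).count t := by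
        have h1 := hav t htE
        have h2 := hcons t htE
        omega
      rcases (by omega : Multiset.card x = 1 ∨ Multiset.card x = 2) with h1 | h2
      · obtain ⟨a, rfl⟩ := Multiset.card_eq_one.mp h1
        have hta : t = a := by
          by_contra hne
          rw [Multiset.count_singleton, if_neg hne] at htx
          omega
        subst hta
        rw [Multiset.count_singleton, if_pos rfl] at htc havt
        have hq : (c 0).count t = 0 := by omega
        have hp : 0 < (c 1).count t := by omega
        rw [W_singleton, W_singleton]
        simp [htE, hq, hp]
      · obtain ⟨a, b, rfl⟩ := Multiset.card_eq_two.mp h2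
        rw [W_pair, W_pair]
        rw [count_pair] at htx htc havt
        by_cases hab : a = b
        · subst hab
          have hta : t = a := by
            by_cases h : t = a
            · exact h
            · rw [if_neg h] at htx; omega
          subst hta
          rw [if_pos rfl] at htc havt
          have hp : 0 < (c 1).count t := by omega
          by_cases hq : 0 < (c 0).count t <;> simp [htE, hp, hq]
        · have hbounds : (if b ∈ P.E then 2 else if 0 < (c 1).count b then 1 else 2) ≤ 2
              ∧ (if a ∈ P.E then 2 else if 0 < (c 1).count a then 1 else 2) ≤ 2 := by
            constructor <;> (split; · omega
                             · split <;> omega)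
          rcases (by
            by_contra hcon
            push_neg at hcon
            rw [if_neg hcon.1, if_neg hcon.2] at htx
            omega : t = a ∨ t = b) with hta | htb
          · subst hta
            rw [if_pos rfl, if_neg hab] at htc havt
            have hq : (c 0).count t = 0 := by omega
            have hp : 0 < (c 1).count t := by omega
            have hβb : (0:ℕ) ≤ (if b ∈ P.E then 0 else
                if 0 < (c 0).count b then (if 0 < (c 1).count b then 1 else 0) else 3) :=
              Nat.zero_le _
            simp only [htE, hq, hp, if_neg htE, if_pos hp]
            simp [htE, hq, hp]
            set A := (if b ∈ P.E then 2 else if 0 < (c 1).count b then 1 else 2) with hA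
            set B := (if b ∈ P.E then (0:ℕ) else
                if 0 < (c 0).count b then (if 0 < (c 1).count b then 1 else 0) else 3) with hB
            have : A ≤ 2 := hbounds.1
            omega
          · subst htb
            rw [if_pos rfl, if_neg (fun h => hab h.symm)] at htc havt
            have hq : (c 0).count t = 0 := by omega
            have hp : 0 < (c 1).count t := by omega
            simp [htE, hq, hp]
            set A := (if a ∈ P.E then 2 else if 0 < (c 1).count a then 1 else 2) with hA
            set B := (if a ∈ P.E then (0:ℕ) else
                if 0 < (c 0).count a then (if 0 < (c 1).count a then 1 else 0) else 3) with hB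
            have : A ≤ 2 := hbounds.2
            omega
    · -- export rule (1, x, 0)
      have hcc1 : (TRule.sym (1:Fin 2) 0 x).consume 1 = x := by simp [TRule.consume]
      have hcc0 : (TRule.sym (1:Fin 2) 0 x).consume 0 = 0 := by simp [TRule.consume]
      have hpp1 : (TRule.sym (1:Fin 2) 0 x).produce 1 = 0 := by simp [TRule.produce]
      have hpp0 : (TRule.sym (1:Fin 2) 0 x).produce 0 = x := by simp [TRule.produce]
      rw [hcc1, hcc0, hpp1, hpp0, W_zero, W_zero]
      simp only [hcc1, hcc0] at hav
      have hwit : ∃ t, (c 1).count t < x.count t := by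
        by_contra hcon
        push_neg at hcon
        exact halted_single hh hr (by rw [hcc1]; exact Multiset.le_iff_count.mpr hcon)
          (fun b hb => by rw [hcc0]; simp)
      obtain ⟨t, htc⟩ := hwit
      have htx : 0 < x.count t := by omega
      have havt : t ∉ P.E → x.count t ≤ (c 0).count t + (c 1).count t := by
        intro htE
        have h1 := hav t htE
        have h2 := hcons t htE
        omega
      rcases (by omega : Multiset.card x = 1 ∨ Multiset.card x = 2) with h1 | h2
      · obtain ⟨a, rfl⟩ := Multiset.card_eq_one.mp h1
        have hta : t = a := by
          by_contra hne
          rw [Multiset.count_singleton, if_neg hne] at htx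
          omega
        subst hta
        rw [Multiset.count_singleton, if_pos rfl] at htc
        have hp : (c 1).count t = 0 := by omega
        rw [W_singleton, W_singleton]
        by_cases htE : t ∈ P.E
        · simp [htE]
        · have hq : 0 < (c 0).count t := by
            have := havt htE
            rw [Multiset.count_singleton, if_pos rfl] at this
            omega
          simp [htE, hp, hq]
      · obtain ⟨a, b, rfl⟩ := Multiset.card_eq_two.mp h2
        rw [W_pair, W_pair]
        rw [count_pair] at htx htc
        by_cases hab : a = b
        · subst hab
          have hta : t = a := by
            by_cases h : t = a
            · exact h
            · rw [if_neg h] at htx; omega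
          subst hta
          rw [if_pos rfl] at htc
          by_cases htE : t ∈ P.E
          · simp [htE]
          · have hv := havt htE
            rw [count_pair, if_pos rfl] at hv
            by_cases hp : 0 < (c 1).count t
            · have hq : 0 < (c 0).count t := by omega
              simp [htE, hp, hq]
            · have hq : 0 < (c 0).count t := by omega
              simp [htE, hp, hq]
        · have hbounds : (1:ℕ) ≤ (if b ∈ P.E then 2 else if 0 < (c 1).count b then 1 else 2)
              ∧ (1:ℕ) ≤ (if a ∈ P.E then 2 else if 0 < (c 1).count a then 1 else 2) := by
            constructor <;> (split; · omega
                             · split <;> omega)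
          have hbb : (if b ∈ P.E then (0:ℕ) else
                if 0 < (c 0).count b then (if 0 < (c 1).count b then 1 else 0) else 3) ≤ 3
              ∧ (if a ∈ P.E then (0:ℕ) else
                if 0 < (c 0).count a then (if 0 < (c 1).count a then 1 else 0) else 3) ≤ 3 := by
            constructor <;> (split; · omega
                             · split; · split <;> omega
                               · omega)
          rcases (by
            by_contra hcon
            push_neg at hcon
            rw [if_neg hcon.1, if_neg hcon.2] at htx
            omega : t = a ∨ t = b) with hta | htb
          · subst hta
            rw [if_pos rfl, if_neg hab] at htc
            have hp : (c 1).count t = 0 := by omega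
            by_cases htE : t ∈ P.E
            · simp only [if_pos htE]
              set A := (if b ∈ P.E then 2 else if 0 < (c 1).count b then 1 else 2) with hA
              set B := (if b ∈ P.E then (0:ℕ) else
                  if 0 < (c 0).count b then (if 0 < (c 1).count b then 1 else 0) else 3) with hB
              have h1 : 1 ≤ A := hbounds.1
              have h2 : B ≤ 3 := hbb.1
              omega
            · have hq : 0 < (c 0).count t := by
                have := havt htE
                rw [count_pair, if_pos rfl, if_neg hab] at this
                omega
              simp only [if_neg htE, hp, if_pos hq]
              simp [htE, hp, hq]
              set A := (if b ∈ P.E then 2 else if 0 < (c 1).count b then 1 else 2) with hA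
              set B := (if b ∈ P.E then (0:ℕ) else
                  if 0 < (c 0).count b then (if 0 < (c 1).count b then 1 else 0) else 3) with hB
              have h1 : 1 ≤ A := hbounds.1
              have h2 : B ≤ 3 := hbb.1
              omega
          · subst htb
            rw [if_pos rfl, if_neg (fun h => hab h.symm)] at htc
            have hp : (c 1).count t = 0 := by omega
            by_cases htE : t ∈ P.E
            · simp only [if_pos htE]
              set A := (if a ∈ P.E then 2 else if 0 < (c 1).count a then 1 else 2) with hA
              set B := (if a ∈ P.E then (0:ℕ) else
                  if 0 < (c 0).count a then (if 0 < (c 1).count a then 1 else 0) else 3) with hB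
              have h1 : 1 ≤ A := hbounds.2
              have h2 : B ≤ 3 := hbb.2
              omega
            · have hq : 0 < (c 0).count t := by
                have := havt htE
                rw [count_pair, if_pos rfl, if_neg (fun h => hab h.symm)] at this
                omega
              simp [htE, hp, hq]
              set A := (if a ∈ P.E then 2 else if 0 < (c 1).count a then 1 else 2) with hA
              set B := (if a ∈ P.E then (0:ℕ) else
                  if 0 < (c 0).count a then (if 0 < (c 1).count a then 1 else 0) else 3) with hB
              have h1 : 1 ≤ A := hbounds.2
              have h2 : B ≤ 3 := hbb.2
              omega
    · exact absurd rfl hij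

/-- Case B: the halting contents of the cell are bounded. -/
lemma boundB (hso : P.SymOnly) (hs : P.SymBound 2) :
    P.NSet ⊆ Set.Iic (2 * Multiset.card (P.w 0)) := by
  rintro m ⟨c, hre, hh, rfl⟩
  have hi : P.i0.succ = (1 : Fin 2) := by rw [Fin.eq_zero P.i0]; rfl
  rw [Set.mem_Iic, hi]
  exact main_bound (fun t => if t ∈ P.E then 2 else if 0 < (c 1).count t then 1 else 2)
    (fun u : Fin k => if 0 < (c 0).count u then (if 0 < (c 1).count u then 1 else 0) else 3)
    (fun t => by split; · omega
                 · split <;> omega)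
    (fun t => by split; · omega
                 · split <;> omega)
    hre (instB hh hso hs (reaches_count hre))

end MinTissue

/-- `NOtP_1(sym_1, anti_2) ∪ NOtP_1(sym_2) ⊆ NFIN`: every set
of natural numbers computed by a tissue P system of degree 1 whose symport
rules have size at most 1 and whose antiport rules have size at most 2, or by
a tissue P system of degree 1 using only symport rules of size at most 2, is
finite. -/
theorem NOtP_one_minimal_subset_NFIN : NOtP 1 1 2 ∪ NOtPsym 1 2 ⊆ NFIN := by
  rintro S (⟨m, hm1, hm2, k, P, hs, ha, rfl⟩ | ⟨m, hm1, hm2, k, P, hso, hs, rfl⟩)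
  · have hm : m = 1 := le_antisymm hm2 hm1
    subst hm
    exact (Set.finite_Iic _).subset (MinTissue.boundA hs ha)
  · have hm : m = 1 := le_antisymm hm2 hm1
    subst hm
    exact (Set.finite_Iic _).subset (MinTissue.boundB hso hs)
end
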